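/- Let d ≥ 2. For every compact set 𝒦 ⊆ Homeo([0,1]^d) and every ε > 0 there exists a homeomorphism f of [0,1]^d with ‖f - id‖ ≤ 2ε such that for every g ∈ 𝒦 and every x ∈ [0,1]^d, limsup_{y→x} |g(f(x)) - g(f(y))| / |x - y| = ∞. In particular, g ∘ f is nowhere differentiable for every g ∈ 𝒦. -/

import Mathlib

open MeasureTheory Metric Set Filter Topology

/-- The unit cube `[0,1]^d` in Euclidean space. -/
def cube (d : ℕ) : Set (EuclideanSpace ℝ (Fin d)) := {x | ∀ i, x i ∈ Icc (0 : ℝ) 1}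

/-- The space of homeomorphisms of the cube `[0,1]^d`, as a subspace of the
space of continuous self-maps of the cube (with the uniform topology). -/
def HomeoCube (d : ℕ) : Type := {g : C(↥(cube d), ↥(cube d)) // IsHomeomorph g}

noncomputable instance (d : ℕ) : TopologicalSpace (HomeoCube d) :=
  instTopologicalSpaceSubtype



lemma cos_lip (a b : ℝ) : |Real.cos a - Real.cos b| ≤ |a - b| := by
  rw [Real.cos_sub_cos]
  have h1 : |Real.sin ((a+b)/2)| ≤ 1 := Real.abs_sin_le_one _
  have h2 : |Real.sin ((a-b)/2)| ≤ |(a-b)/2| := Real.abs_sin_le_abs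
  rw [abs_mul, abs_mul]
  have : |(-2 : ℝ)| = 2 := by norm_num
  rw [this]
  calc 2 * |Real.sin ((a+b)/2)| * |Real.sin ((a-b)/2)|
      ≤ 2 * 1 * |(a-b)/2| := by
        apply mul_le_mul _ h2 (abs_nonneg _) (by norm_num)
        nlinarith [abs_nonneg (Real.sin ((a+b)/2))]
    _ = |a - b| := by rw [abs_div, abs_two]; ring

lemma cube_isCompact (d : ℕ) : IsCompact (cube d) := by
  rw [isCompact_iff_isClosed_bounded]
  constructor
  · have : cube d = ⋂ i, (fun x : EuclideanSpace ℝ (Fin d) => x i) ⁻¹' (Icc 0 1) := by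
      ext x; simp [cube]
    rw [this]
    exact isClosed_iInter fun i =>
      IsClosed.preimage (by exact (continuous_apply i).comp (PiLp.continuous_ofLp _ _)) isClosed_Icc
  · rw [Metric.isBounded_iff]
    refine ⟨Real.sqrt d, fun x hx y hy => ?_⟩
    rw [EuclideanSpace.dist_eq]
    have h1 : ∀ i, dist (x i) (y i) ^ 2 ≤ 1 := by
      intro i
      have hxi := hx i; have hyi := hy i
      simp only [mem_Icc] at hxi hyi
      rw [Real.dist_eq]
      nlinarith [abs_nonneg (x i - y i), abs_sub_le_iff.mpr (⟨by linarith, by linarith⟩ : x i - y i ≤ 1 ∧ y i - x i ≤ 1)]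
    calc Real.sqrt (∑ i, dist (x i) (y i) ^ 2) ≤ Real.sqrt (∑ _i : Fin d, 1) := by
          apply Real.sqrt_le_sqrt; exact Finset.sum_le_sum fun i _ => h1 i
      _ = Real.sqrt d := by simp

instance (d : ℕ) : CompactSpace ↥(cube d) := isCompact_iff_compactSpace.mp (cube_isCompact d)
noncomputable def ramp (a b s : ℝ) : ℝ := max 0 (min 1 ((s - a)/(b - a)))

lemma ramp_nonneg (a b s : ℝ) : 0 ≤ ramp a b s := le_max_left _ _

lemma ramp_le_one (a b s : ℝ) : ramp a b s ≤ 1 := by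
  unfold ramp
  rcases max_cases (0:ℝ) (min 1 ((s - a)/(b - a))) with ⟨h, _⟩ | ⟨h, _⟩
  · rw [h]; exact zero_le_one
  · rw [h]; exact min_le_left _ _

lemma ramp_mono {a b : ℝ} (hab : a < b) : Monotone (ramp a b) := by
  intro s t hst
  unfold ramp
  have h2 : (s - a)/(b - a) ≤ (t - a)/(b - a) := by
    gcongr <;> linarith
  exact max_le_max (le_refl (0:ℝ)) (min_le_min (le_refl (1:ℝ)) h2)

lemma ramp_continuous {a b : ℝ} (hab : a < b) : Continuous (ramp a b) := by
  unfold ramp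
  exact continuous_const.max (continuous_const.min (by fun_prop))

lemma ramp_of_le {a b s : ℝ} (hab : a < b) (h : s ≤ a) : ramp a b s = 0 := by
  unfold ramp
  have hx : (s-a)/(b-a) ≤ 0 := div_nonpos_of_nonpos_of_nonneg (by linarith) (by linarith)
  exact max_eq_left (le_trans (min_le_right _ _) hx)

lemma ramp_of_ge {a b s : ℝ} (hab : a < b) (h : b ≤ s) : ramp a b s = 1 := by
  unfold ramp
  rw [min_eq_left, max_eq_right zero_le_one]
  rw [le_div_iff₀ (by linarith)]
  linarith
lemma summable_succ_geom {r : ℝ} (h0 : 0 ≤ r) (h1 : r < 1) :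
    Summable (fun k : ℕ => r^(k+1)) := by
  simp_rw [pow_succ]
  exact (summable_geometric_of_lt_one h0 h1).mul_right _

lemma tsum_succ_geom {r : ℝ} (h0 : 0 ≤ r) (h1 : r < 1) :
    ∑' k : ℕ, r^(k+1) = r/(1-r) := by
  simp_rw [pow_succ]
  rw [tsum_mul_right, tsum_geometric_of_lt_one h0 h1]
  rw [inv_mul_eq_div]

noncomputable def delk (E : ℝ) (k : ℕ) : ℝ := E * (4:ℝ)⁻¹^(k+1)

lemma delk_pos {E : ℝ} (hE : 0 < E) (k : ℕ) : 0 < delk E k := by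
  unfold delk; positivity

lemma summable_delk (E : ℝ) : Summable (delk E) :=
  (summable_succ_geom (by norm_num) (by norm_num)).mul_left E

lemma tsum_delk (E : ℝ) : ∑' k, delk E k = E/3 := by
  unfold delk
  rw [tsum_mul_left, tsum_succ_geom (by norm_num) (by norm_num)]
  norm_num
  ring

noncomputable def thterm (E : ℝ) (S : ℕ → ℝ) (k : ℕ) (t : ℝ) : ℝ :=
  delk E k * (ramp (S k/2) (S k) t + ramp (1 - S k) (1 - S k/2) t)

noncomputable def th (E : ℝ) (S : ℕ → ℝ) (t : ℝ) : ℝ :=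
  (1 - 2*E/3)*t + ∑' k, thterm E S k t

section Th

variable {E : ℝ} {S : ℕ → ℝ} (hE : 0 < E) (hE2 : E ≤ 1/100)
  (hS : ∀ k, 0 < S k ∧ S k ≤ (4:ℝ)⁻¹^(k+1))

lemma S_le_quarter (hS : ∀ k, 0 < S k ∧ S k ≤ (4:ℝ)⁻¹^(k+1)) (k : ℕ) : S k ≤ 4⁻¹ := by
  refine le_trans (hS k).2 ?_
  calc ((4:ℝ)⁻¹)^(k+1) ≤ 4⁻¹^1 := by
        apply pow_le_pow_of_le_one (by norm_num) (by norm_num) (by omega)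
    _ = 4⁻¹ := pow_one _

include hS in
lemma ramp_lt₁ (k : ℕ) : S k / 2 < S k := by have := (hS k).1; linarith

include hS in
lemma ramp_lt₂ (k : ℕ) : 1 - S k < 1 - S k / 2 := by have := (hS k).1; linarith

include hE hS in
lemma thterm_nonneg (k : ℕ) (t : ℝ) : 0 ≤ thterm E S k t := by
  unfold thterm
  have := ramp_nonneg (S k/2) (S k) t
  have := ramp_nonneg (1 - S k) (1 - S k/2) t
  have := delk_pos hE k
  nlinarith

include hE hS in
lemma thterm_le (k : ℕ) (t : ℝ) : thterm E S k t ≤ delk E k * 2 := by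
  unfold thterm
  have h1 := ramp_le_one (S k/2) (S k) t
  have h2 := ramp_le_one (1 - S k) (1 - S k/2) t
  have := delk_pos hE k
  nlinarith

include hE hS in
lemma thterm_mono (k : ℕ) : Monotone (thterm E S k) := by
  intro t t' h
  unfold thterm
  have h1 := ramp_mono (ramp_lt₁ hS k) h
  have h2 := ramp_mono (ramp_lt₂ hS k) h
  have := (delk_pos hE k).le
  apply mul_le_mul_of_nonneg_left _ this
  exact add_le_add h1 h2

include hE hS in
lemma summable_thterm (t : ℝ) : Summable (fun k => thterm E S k t) := by
  apply Summable.of_nonneg_of_le (fun k => thterm_nonneg hE hS k t) (fun k => thterm_le hE hS k t)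
  exact (summable_delk E).mul_right 2

include hE hS in
lemma th_sub_ge {t t' : ℝ} (h : t ≤ t') :
    (1 - 2*E/3)*(t' - t) ≤ th E S t' - th E S t := by
  unfold th
  have h1 : ∑' k, thterm E S k t ≤ ∑' k, thterm E S k t' :=
    Summable.tsum_le_tsum (fun k => thterm_mono hE hS k h) (summable_thterm hE hS t) (summable_thterm hE hS t')
  nlinarith

include hE hS in
lemma th_zero : th E S 0 = 0 := by
  unfold th
  have : ∀ k, thterm E S k 0 = 0 := by
    intro k
    unfold thterm
    rw [ramp_of_le (ramp_lt₁ hS k) (by have := (hS k).1; linarith),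
      ramp_of_le (ramp_lt₂ hS k) (by have := S_le_quarter hS k; linarith)]
    ring
  simp [this]

include hE hS in
lemma th_one : th E S 1 = 1 := by
  unfold th
  have : ∀ k, thterm E S k 1 = delk E k * 2 := by
    intro k
    unfold thterm
    rw [ramp_of_ge (ramp_lt₁ hS k) (by have := S_le_quarter hS k; linarith),
      ramp_of_ge (ramp_lt₂ hS k) (by have := (hS k).1; linarith)]
    ring
  rw [tsum_congr this, tsum_mul_right, tsum_delk]
  ring

include hE hE2 hS in
lemma th_mem {t : ℝ} (ht : t ∈ Icc (0:ℝ) 1) : th E S t ∈ Icc (0:ℝ) 1 := by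
  obtain ⟨h0, h1⟩ := ht
  have w0 : (0:ℝ) ≤ 1 - 2*E/3 := by linarith
  have a := th_sub_ge hE hS h0
  have b := th_sub_ge hE hS h1
  rw [th_zero hE hS] at a
  rw [th_one hE hS] at b
  constructor <;> nlinarith

include hE hS in
lemma th_near_id {t : ℝ} (ht : t ∈ Icc (0:ℝ) 1) : |th E S t - t| ≤ E := by
  obtain ⟨h0, h1⟩ := ht
  have hB0 : 0 ≤ ∑' k, thterm E S k t := tsum_nonneg (fun k => thterm_nonneg hE hS k t)
  have hB1 : ∑' k, thterm E S k t ≤ 2*E/3 := by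
    calc ∑' k, thterm E S k t ≤ ∑' k, delk E k * 2 :=
          Summable.tsum_le_tsum (fun k => thterm_le hE hS k t) (summable_thterm hE hS t)
            ((summable_delk E).mul_right 2)
      _ = 2*E/3 := by rw [tsum_mul_right, tsum_delk]; ring
  unfold th
  rw [abs_le]
  constructor <;> nlinarith

include hE hS in
lemma th_continuous : Continuous (th E S) := by
  unfold th
  apply Continuous.add (by fun_prop)
  apply continuous_tsum (u := fun k => delk E k * 2)
  · intro k
    unfold thterm
    exact continuous_const.mul ((ramp_continuous (ramp_lt₁ hS k)).add
      (ramp_continuous (ramp_lt₂ hS k)))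
  · exact (summable_delk E).mul_right 2
  · intro k t
    rw [Real.norm_eq_abs, abs_of_nonneg (thterm_nonneg hE hS k t)]
    exact thterm_le hE hS k t

include hE hE2 hS in
lemma th_ge_delk (k : ℕ) {t : ℝ} (h1 : S k ≤ t) (h2 : t ≤ 1) : delk E k ≤ th E S t := by
  unfold th
  have hterm : delk E k ≤ thterm E S k t := by
    unfold thterm
    rw [ramp_of_ge (ramp_lt₁ hS k) h1]
    have := ramp_nonneg (1 - S k) (1 - S k/2) t
    have := (delk_pos hE k).le
    nlinarith
  have hsum : thterm E S k t ≤ ∑' j, thterm E S j t :=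
    Summable.le_tsum (summable_thterm hE hS t) k (fun j _ => thterm_nonneg hE hS j t)
  have ht0 : 0 ≤ t := le_trans (hS k).1.le h1
  nlinarith

include hE hE2 hS in
lemma th_le_one_sub (k : ℕ) {t : ℝ} (h1 : 0 ≤ t) (h2 : t ≤ 1 - S k) : th E S t ≤ 1 - delk E k := by
  have key : delk E k ≤ th E S 1 - th E S t := by
    unfold th
    have hsub : ∑' j, thterm E S j 1 - ∑' j, thterm E S j t
        = ∑' j, (thterm E S j 1 - thterm E S j t) :=
      (Summable.tsum_sub (summable_thterm hE hS 1) (summable_thterm hE hS t)).symm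
    have hterm : delk E k ≤ thterm E S k 1 - thterm E S k t := by
      unfold thterm
      rw [ramp_of_ge (ramp_lt₁ hS k) (by have := S_le_quarter hS k; linarith),
        ramp_of_ge (ramp_lt₂ hS k) (by have := (hS k).1; linarith),
        ramp_of_le (ramp_lt₂ hS k) h2]
      have := ramp_le_one (S k/2) (S k) t
      have := ramp_nonneg (S k/2) (S k) t
      have := (delk_pos hE k).le
      nlinarith
    have hsum2 : Summable (fun j => thterm E S j 1 - thterm E S j t) :=
      (summable_thterm hE hS 1).sub (summable_thterm hE hS t)
    have hle : thterm E S k 1 - thterm E S k t ≤ ∑' j, (thterm E S j 1 - thterm E S j t) :=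
      Summable.le_tsum hsum2 k (fun j _ => by
        have := thterm_mono hE hS j (show t ≤ 1 by
          have := (hS k).1; linarith)
        linarith)
    have w0 : (0:ℝ) ≤ (1 - 2*E/3)*(1 - t) := by
      have := (hS k).1
      nlinarith
    nlinarith
  rw [th_one hE hS] at key
  linarith

include hE hE2 hS in
lemma th_gap (A B : ℝ) : (1 - 2*E/3) * |A - B| ≤ |th E S A - th E S B| := by
  rcases le_total A B with h | h
  · have := th_sub_ge hE hS h
    rw [abs_of_nonpos (by linarith), abs_of_nonpos (by nlinarith)]
    nlinarith
  · have := th_sub_ge hE hS h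
    rw [abs_of_nonneg (by linarith), abs_of_nonneg (by nlinarith)]
    nlinarith


end Th
noncomputable def ak (E : ℝ) (n : ℕ) : ℝ := E * (32:ℝ)⁻¹^(n+1)

lemma ak_pos {E : ℝ} (hE : 0 < E) (n : ℕ) : 0 < ak E n := by unfold ak; positivity

lemma summable_ak (E : ℝ) : Summable (ak E) :=
  (summable_succ_geom (by norm_num) (by norm_num)).mul_left E

lemma tsum_ak_tail (E : ℝ) (n : ℕ) : ∑' m, ak E (m + (n+1)) = ak E n / 31 := by
  unfold ak
  have : ∀ m : ℕ, E * (32:ℝ)⁻¹^(m + (n+1) + 1) = (E * (32:ℝ)⁻¹^(n+1)) * (32:ℝ)⁻¹^(m+1) := by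
    intro m
    rw [show m + (n+1) + 1 = (n+1) + (m+1) by omega, pow_add]
    ring
  rw [tsum_congr this, tsum_mul_left, tsum_succ_geom (by norm_num) (by norm_num)]
  norm_num
  ring

noncomputable def osc (E : ℝ) (P : ℕ → ℝ) (s : ℝ) : ℝ :=
  ∑' n, ak E n * Real.cos (2*Real.pi*s/P n)

section Osc

variable {E : ℝ} {P : ℕ → ℝ} (hE : 0 < E)
  (hP : ∀ n, 0 < P n ∧ P n ≤ 4⁻¹)
  (hPs : ∀ n, (∑ m ∈ Finset.range n, ak E m * (2*Real.pi/P m)) * P n ≤ ak E n / 8)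

include hE in
lemma summable_oscterm (z : ℝ) : Summable (fun n => ak E n * Real.cos (2*Real.pi*z/P n)) := by
  apply Summable.of_norm_bounded (summable_ak E)
  intro n
  rw [Real.norm_eq_abs, abs_mul, abs_of_pos (ak_pos hE n)]
  have h1 : |Real.cos (2*Real.pi*z/P n)| ≤ 1 := Real.abs_cos_le_one _
  nlinarith [ak_pos hE n]

include hE in
lemma osc_continuous : Continuous (osc E P) := by
  unfold osc
  apply continuous_tsum (u := ak E)
  · intro n; fun_prop
  · exact summable_ak E
  · intro n x
    rw [Real.norm_eq_abs, abs_mul, abs_of_pos (ak_pos hE n)]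
    have h1 : |Real.cos (2*Real.pi*x/P n)| ≤ 1 := Real.abs_cos_le_one _
    nlinarith [ak_pos hE n]

include hE in
lemma osc_abs_le (s : ℝ) : |osc E P s| ≤ E / 31 := by
  unfold osc
  have h1 : ∀ n, ‖ak E n * Real.cos (2*Real.pi*s/P n)‖ ≤ ak E n := by
    intro n
    rw [Real.norm_eq_abs, abs_mul, abs_of_pos (ak_pos hE n)]
    have h1 : |Real.cos (2*Real.pi*s/P n)| ≤ 1 := Real.abs_cos_le_one _
    nlinarith [ak_pos hE n]
  have h2 : Summable fun n => ‖ak E n * Real.cos (2*Real.pi*s/P n)‖ :=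
    Summable.of_nonneg_of_le (fun n => norm_nonneg _) h1 (summable_ak E)
  calc |∑' n, ak E n * Real.cos (2*Real.pi*s/P n)|
      ≤ ∑' n, ‖ak E n * Real.cos (2*Real.pi*s/P n)‖ := norm_tsum_le_tsum_norm h2
    _ ≤ ∑' n, ak E n := Summable.tsum_le_tsum h1 h2 (summable_ak E)
    _ = E / 31 := by
        unfold ak
        rw [tsum_mul_left, tsum_succ_geom (by norm_num) (by norm_num)]
        norm_num; ring

include hE hP hPs in
lemma osc_osc (n : ℕ) {s : ℝ} (hs : s ∈ Icc (0:ℝ) 1) :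
    ∃ z ∈ Icc (0:ℝ) 1, |z - s| ≤ P n ∧ ak E n / 2 ≤ |osc E P z - osc E P s| := by
  obtain ⟨hs0, hs1⟩ := hs
  obtain ⟨hp, hp4⟩ := hP n
  set p := P n with hpdef
  -- the base of the interval J = [base, base+p] ⊆ [0,1] around s
  set base := if s + p ≤ 1 then s else s - p with hbasedef
  have hb : s - p ≤ base ∧ base ≤ s ∧ 0 ≤ base ∧ base + p ≤ 1 := by
    rw [hbasedef]; split_ifs with hcase
    · refine ⟨by linarith, le_refl s, hs0, hcase⟩
    · push_neg at hcase
      refine ⟨le_refl _, by linarith, by linarith, by linarith⟩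
  obtain ⟨hb1, hb2, hb3, hb4⟩ := hb
  -- find z in J with |cos(2πz/p) - cos(2πs/p)| ≥ 1
  have hmain : ∃ z, base ≤ z ∧ z ≤ base + p ∧
      1 ≤ |Real.cos (2*Real.pi*z/p) - Real.cos (2*Real.pi*s/p)| := by
    set c := Real.cos (2*Real.pi*s/p) with hcdef
    set m := ⌈base / p⌉ with hmdef
    set z₁ := p * (m:ℝ) with hz₁def
    have hz₁a : base ≤ z₁ := by
      rw [hz₁def]
      calc base = p * (base / p) := by field_simp
        _ ≤ p * (m:ℝ) := by
            apply mul_le_mul_of_nonneg_left (Int.le_ceil _) hp.le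
    have hz₁b : z₁ ≤ base + p := by
      rw [hz₁def]
      have := Int.ceil_lt_add_one (base / p)
      calc p * (m:ℝ) ≤ p * (base/p + 1) := by
            apply mul_le_mul_of_nonneg_left (by rw [hmdef]; linarith) hp.le
        _ = base + p := by field_simp
    have hcos1 : Real.cos (2*Real.pi*z₁/p) = 1 := by
      have harg : 2*Real.pi*z₁/p = (m:ℝ) * (2*Real.pi) := by
        rw [hz₁def]; field_simp
      rw [harg]
      exact Real.cos_int_mul_two_pi m
    by_cases hc1 : 1 ≤ |1 - c|
    · exact ⟨z₁, hz₁a, hz₁b, by rw [hcos1]; exact hc1⟩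
    · push_neg at hc1
      have hcpos : 0 < c := by
        rcases abs_cases (1 - c) with ⟨h, _⟩ | ⟨h, _⟩ <;> linarith
      by_cases hz2 : z₁ + p/2 ≤ base + p
      · refine ⟨z₁ + p/2, by linarith, hz2, ?_⟩
        have harg : 2*Real.pi*(z₁ + p/2)/p = (m:ℝ) * (2*Real.pi) + Real.pi := by
          rw [hz₁def]; field_simp
        rw [harg, Real.cos_int_mul_two_pi_add_pi]
        rw [abs_of_nonpos (by linarith)]
        linarith
      · push_neg at hz2
        refine ⟨z₁ - p/2, by linarith, by linarith, ?_⟩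
        have harg : 2*Real.pi*(z₁ - p/2)/p = (m:ℝ) * (2*Real.pi) - Real.pi := by
          rw [hz₁def]; field_simp
        rw [harg, Real.cos_int_mul_two_pi_sub_pi]
        rw [abs_of_nonpos (by linarith)]
        linarith
  obtain ⟨z, hzJ1, hzJ2, hcosz⟩ := hmain
  have hz0 : 0 ≤ z := le_trans hb3 hzJ1
  have hz1 : z ≤ 1 := le_trans hzJ2 hb4
  have hzs : |z - s| ≤ p := abs_le.mpr ⟨by linarith, by linarith⟩
  refine ⟨z, ⟨hz0, hz1⟩, hzs, ?_⟩
  -- main estimate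
  set F : ℕ → ℝ := fun k => ak E k * (Real.cos (2*Real.pi*z/P k) - Real.cos (2*Real.pi*s/P k))
    with hFdef
  have hFbound : ∀ k, ‖F k‖ ≤ 2 * ak E k := by
    intro k
    rw [hFdef]
    simp only [Real.norm_eq_abs, abs_mul, abs_of_pos (ak_pos hE k)]
    have h1 : |Real.cos (2*Real.pi*z/P k)| ≤ 1 := Real.abs_cos_le_one _
    have h2 : |Real.cos (2*Real.pi*s/P k)| ≤ 1 := Real.abs_cos_le_one _
    have h3 : |Real.cos (2*Real.pi*z/P k) - Real.cos (2*Real.pi*s/P k)| ≤ 2 := by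
      rcases abs_cases (Real.cos (2*Real.pi*z/P k)) with ⟨ha, _⟩ | ⟨ha, _⟩ <;>
      rcases abs_cases (Real.cos (2*Real.pi*s/P k)) with ⟨hb', _⟩ | ⟨hb', _⟩ <;>
      rcases abs_cases (Real.cos (2*Real.pi*z/P k) - Real.cos (2*Real.pi*s/P k)) with
        ⟨hc', _⟩ | ⟨hc', _⟩ <;> linarith
    nlinarith [ak_pos hE k]
  have hFsummable : Summable F := by
    apply Summable.of_norm_bounded ((summable_ak E).mul_left 2) hFbound
  have hdiff : osc E P z - osc E P s = ∑' k, F k := by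
    unfold osc
    rw [← Summable.tsum_sub (summable_oscterm hE z) (summable_oscterm hE s)]
    apply tsum_congr
    intro k
    rw [hFdef]; ring
  have hsplit : ∑' k, F k = (∑ k ∈ Finset.range (n+1), F k) + ∑' k, F (k + (n+1)) :=
    (Summable.sum_add_tsum_nat_add (n+1) hFsummable).symm
  have hFn : ak E n ≤ |F n| := by
    rw [hFdef]
    simp only [abs_mul, abs_of_pos (ak_pos hE n)]
    rw [← hpdef]
    nlinarith [ak_pos hE n]
  have hlow : |∑ k ∈ Finset.range n, F k| ≤ ak E n / 8 := by
    calc |∑ k ∈ Finset.range n, F k| ≤ ∑ k ∈ Finset.range n, |F k| :=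
          Finset.abs_sum_le_sum_abs _ _
      _ ≤ ∑ k ∈ Finset.range n, ak E k * (2*Real.pi/P k) * p := by
          apply Finset.sum_le_sum
          intro k _
          rw [hFdef]
          simp only [abs_mul, abs_of_pos (ak_pos hE k)]
          have hlip : |Real.cos (2*Real.pi*z/P k) - Real.cos (2*Real.pi*s/P k)|
              ≤ (2*Real.pi/P k) * p := by
            refine le_trans (cos_lip _ _) ?_
            have hPk := (hP k).1
            have harg : 2*Real.pi*z/P k - 2*Real.pi*s/P k = (2*Real.pi/P k) * (z - s) := by
              field_simp
            rw [harg, abs_mul, abs_of_pos (by positivity : 0 < 2*Real.pi/P k)]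
            exact mul_le_mul_of_nonneg_left hzs (by positivity)
          calc ak E k * |Real.cos (2*Real.pi*z/P k) - Real.cos (2*Real.pi*s/P k)|
              ≤ ak E k * ((2*Real.pi/P k) * p) :=
                mul_le_mul_of_nonneg_left hlip (ak_pos hE k).le
            _ = ak E k * (2*Real.pi/P k) * p := by ring
      _ = (∑ k ∈ Finset.range n, ak E k * (2*Real.pi/P k)) * p := by
          rw [Finset.sum_mul]
      _ ≤ ak E n / 8 := hPs n
  have htail : |∑' k, F (k + (n+1))| ≤ ak E n / 8 := by
    have hsum2 : Summable fun k => ‖F (k + (n+1))‖ :=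
      ((summable_ak E).mul_left 2).comp_injective (add_left_injective (n+1)) |>.of_nonneg_of_le
        (fun k => norm_nonneg _) (fun k => hFbound _) |>.congr (fun k => rfl)
    calc |∑' k, F (k + (n+1))| ≤ ∑' k, ‖F (k + (n+1))‖ := norm_tsum_le_tsum_norm hsum2
      _ ≤ ∑' k, 2 * ak E (k + (n+1)) := by
          apply Summable.tsum_le_tsum (fun k => hFbound _) hsum2
          exact ((summable_ak E).comp_injective (add_left_injective (n+1))).mul_left 2
      _ = 2 * (ak E n / 31) := by rw [tsum_mul_left, tsum_ak_tail]
      _ ≤ ak E n / 8 := by nlinarith [ak_pos hE n]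
  -- combine
  rw [hdiff]
  have hsum_eq : ∑ k ∈ Finset.range (n+1), F k = (∑ k ∈ Finset.range n, F k) + F n :=
    Finset.sum_range_succ F n
  set T := ∑' k, F k
  set L := ∑ k ∈ Finset.range n, F k
  set R := ∑' k, F (k + (n+1))
  have hT : T = L + F n + R := by rw [hsplit, hsum_eq]
  rcases abs_cases (F n) with ⟨hFe, _⟩ | ⟨hFe, _⟩ <;>
  rcases abs_cases T with ⟨hTe, _⟩ | ⟨hTe, _⟩ <;>
  rcases abs_cases L with ⟨hLe, _⟩ | ⟨hLe, _⟩ <;>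
  rcases abs_cases R with ⟨hRe, _⟩ | ⟨hRe, _⟩ <;>
  linarith

end Osc
section CubeHelpers

variable {d : ℕ}

lemma coord_le_dist (x y : EuclideanSpace ℝ (Fin d)) (j : Fin d) : |x j - y j| ≤ dist x y := by
  rw [EuclideanSpace.dist_eq]
  rw [show |x j - y j| = Real.sqrt (dist (x j) (y j)^2) by
    rw [Real.sqrt_sq_eq_abs, Real.dist_eq, abs_abs]]
  apply Real.sqrt_le_sqrt
  exact Finset.single_le_sum (f := fun i => dist (x i) (y i)^2)
    (fun i _ => sq_nonneg _) (Finset.mem_univ j)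

lemma dist_eq_single {x y : EuclideanSpace ℝ (Fin d)} (j : Fin d)
    (h : ∀ i, i ≠ j → x i = y i) : dist x y = |x j - y j| := by
  rw [EuclideanSpace.dist_eq]
  rw [Finset.sum_eq_single_of_mem j (Finset.mem_univ j)
    (fun i _ hij => by rw [Real.dist_eq, h i hij]; simp)]
  rw [Real.dist_eq, Real.sqrt_sq_eq_abs, abs_abs]

noncomputable def updPt (x : EuclideanSpace ℝ (Fin d)) (j : Fin d) (c : ℝ) :
    EuclideanSpace ℝ (Fin d) :=
  (WithLp.equiv 2 _).symm (Function.update ((WithLp.equiv 2 _) x) j c)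

lemma updPt_apply (x : EuclideanSpace ℝ (Fin d)) (j i : Fin d) (c : ℝ) :
    updPt x j c i = if i = j then c else x i := by
  unfold updPt
  show Function.update ((WithLp.equiv 2 _) x) j c i = _
  rw [Function.update_apply]
  rfl

end CubeHelpers

noncomputable def wfun (t : ℝ) : ℝ := min t (1 - t)

lemma wfun_lip (a b : ℝ) : |wfun a - wfun b| ≤ |a - b| := by
  unfold wfun
  have A := le_abs_self (a - b)
  have B := neg_abs_le (a - b)
  rcases min_cases a (1-a) with ⟨h1, h1'⟩ | ⟨h1, h1'⟩ <;>
  rcases min_cases b (1-b) with ⟨h2, h2'⟩ | ⟨h2, h2'⟩ <;>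
  rw [h1, h2, abs_le] <;> constructor <;> linarith

lemma wfun_nonneg {t : ℝ} (ht : t ∈ Icc (0:ℝ) 1) : 0 ≤ wfun t :=
  le_min ht.1 (by linarith [ht.2])

lemma wfun_cont : Continuous wfun := continuous_id.min (continuous_const.sub continuous_id)

noncomputable def psi (c t : ℝ) : ℝ := t + c * wfun t

lemma psi_gap {c : ℝ} (hc : |c| ≤ 1/2) {t t' : ℝ} (h : t ≤ t') :
    (t' - t)/2 ≤ psi c t' - psi c t := by
  unfold psi
  have h1 := wfun_lip t' t
  have h2 : |c * (wfun t' - wfun t)| ≤ (t' - t)/2 := by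
    rw [abs_mul]
    calc |c| * |wfun t' - wfun t| ≤ (1/2) * |t' - t| := by
          apply mul_le_mul hc h1 (abs_nonneg _) (by norm_num)
      _ = (t' - t)/2 := by rw [abs_of_nonneg (by linarith)]; ring
  rcases abs_cases (c * (wfun t' - wfun t)) with ⟨h3, _⟩ | ⟨h3, _⟩ <;> nlinarith

lemma psi_zero (c : ℝ) : psi c 0 = 0 := by unfold psi wfun; norm_num

lemma psi_one (c : ℝ) : psi c 1 = 1 := by unfold psi wfun; norm_num

lemma psi_mem {c : ℝ} (hc : |c| ≤ 1/2) {t : ℝ} (ht : t ∈ Icc (0:ℝ) 1) :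
    psi c t ∈ Icc (0:ℝ) 1 := by
  obtain ⟨h0, h1⟩ := ht
  have hw0 : 0 ≤ wfun t := wfun_nonneg ⟨h0, h1⟩
  have hw1 : wfun t ≤ t := min_le_left _ _
  have hw2 : wfun t ≤ 1 - t := min_le_right _ _
  have hcw : |c * wfun t| ≤ wfun t / 2 := by
    rw [abs_mul]
    calc |c| * |wfun t| ≤ (1/2) * wfun t := by
          rw [abs_of_nonneg hw0]
          apply mul_le_mul_of_nonneg_right hc hw0
      _ = wfun t / 2 := by ring
  unfold psi
  rcases abs_cases (c * wfun t) with ⟨h3, _⟩ | ⟨h3, _⟩ <;> constructor <;> nlinarith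

lemma psi_cont (c : ℝ) : Continuous (psi c) := by
  unfold psi
  exact continuous_id.add (continuous_const.mul wfun_cont)

lemma psi_surj {c : ℝ} (hc : |c| ≤ 1/2) {v : ℝ} (hv : v ∈ Icc (0:ℝ) 1) :
    ∃ t ∈ Icc (0:ℝ) 1, psi c t = v := by
  have := intermediate_value_Icc (by norm_num : (0:ℝ) ≤ 1) (psi_cont c).continuousOn
  rw [psi_zero, psi_one] at this
  obtain ⟨t, ht, hpt⟩ := this hv
  exact ⟨t, ht, hpt⟩

section Eta

set_option maxHeartbeats 1000000 in
lemma eta_bound {d : ℕ} (𝒦 : Set (HomeoCube d)) (h𝒦 : IsCompact 𝒦) {δ : ℝ} (hδ : 0 < δ) :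
    ∃ c, 0 < c ∧ ∀ g ∈ 𝒦, ∀ a b : ↥(cube d), δ ≤ dist a b →
      c ≤ dist (g.1 a) (g.1 b) := by
  classical
  set X := ↥(cube d)
  set D : Set (X × X) := {p | δ ≤ dist p.1 p.2} with hDdef
  have hDclosed : IsClosed D :=
    isClosed_le continuous_const continuous_dist
  have hDcompact : IsCompact D := hDclosed.isCompact
  set T : Set (HomeoCube d × X × X) := 𝒦 ×ˢ D with hTdef
  have hTcompact : IsCompact T := h𝒦.prod hDcompact
  have hevalcont : Continuous fun q : HomeoCube d × X × X => dist (q.1.1 q.2.1) (q.1.1 q.2.2) := by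
    have h1 : Continuous fun q : HomeoCube d × X × X => (q.1.1 : C(X, X)) :=
      continuous_subtype_val.comp continuous_fst
    apply Continuous.dist
    · exact h1.eval (continuous_fst.comp continuous_snd)
    · exact h1.eval (continuous_snd.comp continuous_snd)
  rcases T.eq_empty_or_nonempty with hemp | hne
  · refine ⟨1, one_pos, fun g hg a b hab => ?_⟩
    exfalso
    have hmem : (⟨g, a, b⟩ : HomeoCube d × X × X) ∈ T := Set.mem_prod.mpr ⟨hg, hab⟩
    rw [hemp] at hmem
    exact hmem
  · obtain ⟨q₀, hq₀T, hq₀min⟩ := hTcompact.exists_isMinOn hne hevalcont.continuousOn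
    have hmin : ∀ q ∈ T, dist (q₀.1.1 q₀.2.1) (q₀.1.1 q₀.2.2)
        ≤ dist (q.1.1 q.2.1) (q.1.1 q.2.2) := fun q hq => hq₀min hq
    refine ⟨dist (q₀.1.1 q₀.2.1) (q₀.1.1 q₀.2.2), ?_, fun g hg a b hab => ?_⟩
    · rw [dist_pos]
      intro heq
      have hinj := q₀.1.2.injective
      have h21 : q₀.2.1 = q₀.2.2 := hinj heq
      have hd : δ ≤ dist q₀.2.1 q₀.2.2 := hq₀T.2
      rw [h21, dist_self] at hd
      linarith
    · have hmem : (⟨g, a, b⟩ : HomeoCube d × X × X) ∈ T := Set.mem_prod.mpr ⟨hg, hab⟩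
      exact hmin ⟨g, a, b⟩ hmem

end Eta


section Map

variable {d : ℕ} (i0 i1 : Fin d) (E : ℝ) (S P : ℕ → ℝ)

noncomputable def Fmap (x : EuclideanSpace ℝ (Fin d)) : EuclideanSpace ℝ (Fin d) :=
  updPt x i1 (th E S (psi (osc E P (x i0)) (x i1)))

variable {i0 i1 E S P}

lemma Fmap_apply_ne {x : EuclideanSpace ℝ (Fin d)} {i : Fin d} (h : i ≠ i1) :
    Fmap i0 i1 E S P x i = x i := by
  unfold Fmap; rw [updPt_apply, if_neg h]

lemma Fmap_apply_i1 (x : EuclideanSpace ℝ (Fin d)) :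
    Fmap i0 i1 E S P x i1 = th E S (psi (osc E P (x i0)) (x i1)) := by
  unfold Fmap; rw [updPt_apply, if_pos rfl]

variable (hE : 0 < E) (hE2 : E ≤ 1/100)
  (hS : ∀ k, 0 < S k ∧ S k ≤ (4:ℝ)⁻¹^(k+1))

include hE hE2 in
lemma osc_small (u : ℝ) : |osc E P u| ≤ 1/2 := by
  have := osc_abs_le hE (P := P) u
  linarith

include hE hE2 hS in
lemma Fmap_mem {x : EuclideanSpace ℝ (Fin d)} (hx : x ∈ cube d) :
    Fmap i0 i1 E S P x ∈ cube d := by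
  intro i
  rcases eq_or_ne i i1 with rfl | h
  · rw [Fmap_apply_i1]
    exact th_mem hE hE2 hS (psi_mem (osc_small hE hE2 _) (hx i))
  · rw [Fmap_apply_ne h]
    exact hx i

lemma coord_cont {d : ℕ} (j : Fin d) : Continuous fun x : EuclideanSpace ℝ (Fin d) => x j :=
  (continuous_apply j).comp (PiLp.continuous_ofLp _ _)

include hE hE2 hS in
lemma Fmap_continuous : Continuous (Fmap i0 i1 E S P) := by
  have hc : Continuous fun x : EuclideanSpace ℝ (Fin d) =>
      th E S (psi (osc E P (x i0)) (x i1)) := by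
    apply (th_continuous hE hS).comp
    unfold psi
    exact (coord_cont i1).add (((osc_continuous hE).comp (coord_cont i0)).mul
      (wfun_cont.comp (coord_cont i1)))
  unfold Fmap updPt
  apply (PiLp.continuous_toLp _ _).comp
  apply continuous_pi
  intro i
  rcases eq_or_ne i i1 with rfl | h
  · simpa [Function.update_apply] using hc
  · simp only [Function.update_apply, if_neg h]
    exact coord_cont i

include hE hE2 hS in
lemma euclid_ext {x y : EuclideanSpace ℝ (Fin d)} (h : ∀ i, x i = y i) : x = y := by
  apply (WithLp.equiv 2 _).injective
  funext i
  exact h i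

variable (hne : i0 ≠ i1)

include hne hE hE2 hS in
lemma Fmap_inj {x y : EuclideanSpace ℝ (Fin d)}
    (heq : Fmap i0 i1 E S P x = Fmap i0 i1 E S P y) : x = y := by
  have hw0 : (0:ℝ) < 1 - 2*E/3 := by linarith
  have hcoord : ∀ i, i ≠ i1 → x i = y i := by
    intro i h
    have := congrArg (fun v : EuclideanSpace ℝ (Fin d) => v i) heq
    simpa [Fmap_apply_ne h] using this
  have h0 : x i0 = y i0 := hcoord i0 hne
  have h1 : th E S (psi (osc E P (x i0)) (x i1)) = th E S (psi (osc E P (x i0)) (y i1)) := by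
    have := congrArg (fun v : EuclideanSpace ℝ (Fin d) => v i1) heq
    simpa [Fmap_apply_i1, h0] using this
  have h2 : psi (osc E P (x i0)) (x i1) = psi (osc E P (x i0)) (y i1) := by
    by_contra hne2
    have := th_gap hE hE2 hS (psi (osc E P (x i0)) (x i1)) (psi (osc E P (x i0)) (y i1))
    rw [h1, sub_self, abs_zero] at this
    have habs : 0 < |psi (osc E P (x i0)) (x i1) - psi (osc E P (x i0)) (y i1)| :=
      abs_pos.mpr (sub_ne_zero.mpr hne2)
    nlinarith
  have h3 : x i1 = y i1 := by
    by_contra hne3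
    rcases lt_or_gt_of_ne hne3 with h | h
    · have := psi_gap (c := osc E P (x i0)) (osc_small (P := P) hE hE2 (x i0)) h.le
      rw [h2, sub_self] at this
      linarith
    · have := psi_gap (c := osc E P (x i0)) (osc_small (P := P) hE hE2 (x i0)) h.le
      rw [← h2, sub_self] at this
      linarith
  apply euclid_ext hE hE2 hS
  intro i
  rcases eq_or_ne i i1 with h | h
  · rw [h]; exact h3
  · exact hcoord i h

include hne hE hE2 hS in
lemma Fmap_surjOn {y : EuclideanSpace ℝ (Fin d)} (hy : y ∈ cube d) :
    ∃ x ∈ cube d, Fmap i0 i1 E S P x = y := by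
  have hth := intermediate_value_Icc (by norm_num : (0:ℝ) ≤ 1)
    (th_continuous hE hS).continuousOn
  rw [th_zero hE hS, th_one hE hS] at hth
  obtain ⟨v, hv, hthv⟩ := hth (hy i1)
  obtain ⟨t, ht, hpsit⟩ := psi_surj (osc_small hE hE2 (y i0)) hv
  refine ⟨updPt y i1 t, ?_, ?_⟩
  · intro i
    rw [updPt_apply]
    rcases eq_or_ne i i1 with h | h
    · rw [if_pos h]; exact ht
    · rw [if_neg h]; exact hy i
  · apply euclid_ext hE hE2 hS
    intro i
    rcases eq_or_ne i i1 with h | h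
    · rw [h, Fmap_apply_i1, updPt_apply, updPt_apply, if_neg hne, if_pos rfl, hpsit, hthv]
    · rw [Fmap_apply_ne h, updPt_apply, if_neg h]

include hE hE2 hS in
lemma Fmap_dist {x : EuclideanSpace ℝ (Fin d)} (hx : x ∈ cube d) :
    dist (Fmap i0 i1 E S P x) x ≤ 2 * E := by
  rw [dist_eq_single i1 (fun i h => Fmap_apply_ne h)]
  rw [Fmap_apply_i1]
  set c := osc E P (x i0) with hcdef
  set v := x i1 with hvdef
  have hv : v ∈ Icc (0:ℝ) 1 := hx i1
  have hpsimem := psi_mem (c := c) (osc_small (P := P) hE hE2 (x i0)) hv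
  have h1 : |th E S (psi c v) - psi c v| ≤ E := th_near_id hE hS hpsimem
  have h2 : |psi c v - v| ≤ E := by
    unfold psi
    rw [add_sub_cancel_left, abs_mul]
    have hcb : |c| ≤ E/31 := osc_abs_le hE _
    have hwb : |wfun v| ≤ 1 := by
      rw [abs_of_nonneg (wfun_nonneg hv)]
      exact le_trans (min_le_left _ _) hv.2
    nlinarith [abs_nonneg c, abs_nonneg (wfun v)]
  calc |th E S (psi c v) - v| ≤ |th E S (psi c v) - psi c v| + |psi c v - v| :=
        abs_sub_le _ _ _
    _ ≤ 2 * E := by linarith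

end Map

set_option maxHeartbeats 1000000 in
/-- For `d ≥ 2`, every compact set `𝒦` of homeomorphisms of `[0,1]^d` and every
`ε > 0` admit a homeomorphism `f` with `‖f - id‖ ≤ 2ε` such that for every
`g ∈ 𝒦` and every `x`, `limsup_{y→x} |g(f(x)) - g(f(y))| / |x - y| = ∞`;
in particular `g ∘ f` is nowhere differentiable for every `g ∈ 𝒦`. -/
theorem stmt13 (d : ℕ) (hd : 2 ≤ d) (𝒦 : Set (HomeoCube d)) (h𝒦 : IsCompact 𝒦)
    (ε : ℝ) (hε : 0 < ε) :
    ∃ f : HomeoCube d, (∀ x : ↥(cube d), dist (f.1 x) x ≤ 2 * ε) ∧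
      ∀ g ∈ 𝒦, ∀ x : ↥(cube d), ∀ C : ℝ,
        ∃ᶠ y in 𝓝[≠] x, C < dist (g.1 (f.1 x)) (g.1 (f.1 y)) / dist x y := by
  classical
  set E := min ε (1/100) with hEdef
  have hE : 0 < E := lt_min hε (by norm_num)
  have hE2 : E ≤ 1/100 := min_le_right _ _
  have hEε : E ≤ ε := min_le_left _ _
  have hw0 : (0:ℝ) < 1 - 2*E/3 := by linarith
  set i0 : Fin d := ⟨0, by omega⟩ with hi0
  set i1 : Fin d := ⟨1, by omega⟩ with hi1
  have hne : i0 ≠ i1 := by simp [hi0, hi1, Fin.ext_iff]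
  -- corner-level moduli
  have hSex : ∀ k : ℕ, ∃ c, 0 < c ∧ ∀ g ∈ 𝒦, ∀ a b : ↥(cube d), delk E k ≤ dist a b →
      c ≤ dist (g.1 a) (g.1 b) := fun k => eta_bound 𝒦 h𝒦 (delk_pos hE k)
  choose cS hcSpos hcS using hSex
  set S : ℕ → ℝ := fun k => min (cS k / (2*((k:ℝ)+1))) ((4:ℝ)⁻¹^(k+1)) with hSdef
  have hS : ∀ k, 0 < S k ∧ S k ≤ (4:ℝ)⁻¹^(k+1) := by
    intro k
    refine ⟨lt_min (div_pos (hcSpos k) (by positivity)) (by positivity), min_le_right _ _⟩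
  have hS2 : ∀ k : ℕ, ((k:ℝ)+1) * (2 * S k) ≤ cS k := by
    intro k
    have h1 : S k ≤ cS k / (2*((k:ℝ)+1)) := min_le_left _ _
    have h2 : (0:ℝ) < 2*((k:ℝ)+1) := by positivity
    rw [le_div_iff₀ h2] at h1
    linarith
  -- interior-level moduli
  set e : ℕ → ℝ := fun n => (1 - 2*E/3) * (ak E n / 2) * ((4:ℝ)⁻¹^(n+1)) with hedef
  have hepos : ∀ n, 0 < e n := by
    intro n
    have h1 := ak_pos hE n
    rw [hedef]
    positivity
  have hPex : ∀ n : ℕ, ∃ c, 0 < c ∧ ∀ g ∈ 𝒦, ∀ a b : ↥(cube d), e n ≤ dist a b →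
      c ≤ dist (g.1 a) (g.1 b) := fun n => eta_bound 𝒦 h𝒦 (hepos n)
  choose cP hcPpos hcP using hPex
  -- recursive period sequence
  set pp : ℕ → ℝ → ℝ := fun n L =>
    min (min (ak E n / (8*(1+L))) (cP n / (2*((n:ℝ)+1)))) 4⁻¹ with hppdef
  set Q : ℕ → ℝ × ℝ := fun n => Nat.rec (pp 0 0, ak E 0 * (2*Real.pi/(pp 0 0)))
    (fun m ih => (pp (m+1) ih.2, ih.2 + ak E (m+1) * (2*Real.pi/(pp (m+1) ih.2)))) n with hQdef
  set P : ℕ → ℝ := fun n => (Q n).1 with hPdef2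
  set Lsum : ℕ → ℝ := fun n => ∑ m ∈ Finset.range n, ak E m * (2*Real.pi/P m) with hLdef
  have hQL : ∀ n, P n = pp n (Lsum n) ∧ (Q n).2 = Lsum (n+1) := by
    intro n
    induction n with
    | zero =>
      have h0 : Lsum 0 = 0 := by simp [hLdef]
      have h1 : Lsum 1 = ak E 0 * (2*Real.pi/P 0) := by
        simp only [hLdef, Finset.sum_range_one]
      exact ⟨by rw [h0]; rfl, by rw [h1]; rfl⟩
    | succ n ih =>
      obtain ⟨ih1, ih2⟩ := ih
      have hP1 : P (n+1) = pp (n+1) (Lsum (n+1)) := by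
        show (Q (n+1)).1 = _
        rw [show Q (n+1) = (pp (n+1) (Q n).2,
          (Q n).2 + ak E (n+1) * (2*Real.pi/(pp (n+1) (Q n).2))) from rfl]
        rw [ih2]
      refine ⟨hP1, ?_⟩
      show (Q (n+1)).2 = _
      rw [show Q (n+1) = (pp (n+1) (Q n).2,
        (Q n).2 + ak E (n+1) * (2*Real.pi/(pp (n+1) (Q n).2))) from rfl]
      have hL2 : Lsum (n+2) = Lsum (n+1) + ak E (n+1) * (2*Real.pi/P (n+1)) := by
        simp only [hLdef]
        exact Finset.sum_range_succ _ (n+1)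
      dsimp only
      rw [ih2, hL2, hP1]
  have hLnn : ∀ n, 0 ≤ Lsum n ∧ 0 < P n := by
    intro n
    induction n with
    | zero =>
      have h0 : Lsum 0 = 0 := by simp [hLdef]
      refine ⟨by rw [h0], ?_⟩
      rw [(hQL 0).1, h0, hppdef]
      have := ak_pos hE 0
      have := hcPpos 0
      positivity
    | succ n ih =>
      obtain ⟨ihL, ihP⟩ := ih
      have hL1 : 0 ≤ Lsum (n+1) := by
        have hstep : Lsum (n+1) = Lsum n + ak E n * (2*Real.pi/P n) := by
          simp only [hLdef]; exact Finset.sum_range_succ _ n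
        have : 0 ≤ ak E n * (2*Real.pi/P n) := by
          have := ak_pos hE n
          have := Real.pi_pos
          positivity
        linarith [hstep.ge, hstep.le]
      refine ⟨hL1, ?_⟩
      rw [(hQL (n+1)).1, hppdef]
      have := ak_pos hE (n+1)
      have := hcPpos (n+1)
      have h1L : (0:ℝ) < 1 + Lsum (n+1) := by linarith
      positivity
  have hP : ∀ n, 0 < P n ∧ P n ≤ 4⁻¹ := by
    intro n
    refine ⟨(hLnn n).2, ?_⟩
    rw [(hQL n).1, hppdef]
    exact min_le_right _ _
  have hPle1 : ∀ n, P n ≤ ak E n / (8*(1+Lsum n)) := by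
    intro n
    rw [(hQL n).1, hppdef]
    exact le_trans (min_le_left _ _) (min_le_left _ _)
  have hPle2 : ∀ n, P n ≤ cP n / (2*((n:ℝ)+1)) := by
    intro n
    rw [(hQL n).1, hppdef]
    exact le_trans (min_le_left _ _) (min_le_right _ _)
  have hPs : ∀ n, (∑ m ∈ Finset.range n, ak E m * (2*Real.pi/P m)) * P n ≤ ak E n / 8 := by
    intro n
    have hL0 := (hLnn n).1
    have hD : (0:ℝ) < 1 + Lsum n := by linarith
    have h1 := hPle1 n
    calc Lsum n * P n ≤ (1 + Lsum n) * P n :=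
          mul_le_mul_of_nonneg_right (by linarith) (hLnn n).2.le
      _ ≤ (1 + Lsum n) * (ak E n / (8*(1+Lsum n))) :=
          mul_le_mul_of_nonneg_left h1 hD.le
      _ = ak E n / 8 := by field_simp
  have hPcP : ∀ n : ℕ, ((n:ℝ)+1) * P n ≤ cP n := by
    intro n
    have h1 := hPle2 n
    have h2 : (0:ℝ) < 2*((n:ℝ)+1) := by positivity
    rw [le_div_iff₀ h2] at h1
    nlinarith [(hLnn n).2.le]
  have hPsmall : ∀ n, P n ≤ (32:ℝ)⁻¹^(n+1) := by
    intro n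
    have h1 := hPle1 n
    have hL0 := (hLnn n).1
    have h2 : ak E n / (8*(1+Lsum n)) ≤ ak E n := by
      apply div_le_self (ak_pos hE n).le
      linarith
    have h3 : ak E n ≤ (32:ℝ)⁻¹^(n+1) := by
      unfold ak
      nlinarith [pow_pos (show (0:ℝ) < 32⁻¹ by norm_num) (n+1)]
    linarith
  -- the homeomorphism
  set F : ↥(cube d) → ↥(cube d) :=
    fun x => ⟨Fmap i0 i1 E S P x.1, Fmap_mem hE hE2 hS x.2⟩ with hFdef
  have hFcont : Continuous F :=
    Continuous.subtype_mk ((Fmap_continuous hE hE2 hS).comp continuous_subtype_val) _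
  have hFbij : Function.Bijective F := by
    constructor
    · intro x y hxy
      exact Subtype.ext (Fmap_inj hE hE2 hS hne (congrArg Subtype.val hxy))
    · intro y
      obtain ⟨x, hx, hFx⟩ := Fmap_surjOn hE hE2 hS hne y.2
      exact ⟨⟨x, hx⟩, Subtype.ext hFx⟩
  have hfhom : IsHomeomorph (⟨F, hFcont⟩ : C(↥(cube d), ↥(cube d))) :=
    isHomeomorph_iff_continuous_bijective.mpr ⟨hFcont, hFbij⟩
  refine ⟨⟨⟨F, hFcont⟩, hfhom⟩, ?_, ?_⟩
  · intro x
    show dist (F x) x ≤ 2 * ε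
    rw [Subtype.dist_eq]
    calc dist (Fmap i0 i1 E S P x.1) x.1 ≤ 2 * E := Fmap_dist hE hE2 hS x.2
      _ ≤ 2 * ε := by linarith
  · intro g hg x C
    rw [Filter.frequently_iff]
    intro U hU
    rw [Metric.mem_nhdsWithin_iff] at hU
    obtain ⟨r, hr, hrU⟩ := hU
    -- it suffices to find a suitable point y
    suffices hsuf : ∃ y : ↥(cube d), dist y x < r ∧ y ≠ x ∧
        C < dist (g.1 (F x)) (g.1 (F y)) / dist x y by
      obtain ⟨y, h1, h2, h3⟩ := hsuf
      exact ⟨y, hrU ⟨Metric.mem_ball.mpr h1, h2⟩, h3⟩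
    have hx1mem : x.1 i1 ∈ Icc (0:ℝ) 1 := x.2 i1
    by_cases hbd : x.1 i1 = 0 ∨ x.1 i1 = 1
    · -- boundary mechanism
      obtain ⟨N, hN⟩ : ∃ N : ℕ, ((4:ℝ)⁻¹)^N < r/2 :=
        exists_pow_lt_of_lt_one (by positivity) (by norm_num)
      set k := max N (Nat.ceil C) with hkdef
      have hSk4 : S k ≤ ((4:ℝ)⁻¹)^(k+1) := (hS k).2
      have hpow : ((4:ℝ)⁻¹)^(k+1) ≤ ((4:ℝ)⁻¹)^N :=
        pow_le_pow_of_le_one (by norm_num) (by norm_num) (by omega)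
      have hSkr : 2 * S k < r := by nlinarith
      have hSk14 : S k ≤ 4⁻¹ := S_le_quarter hS k
      have hSkpos := (hS k).1
      have hkC : C ≤ (k:ℝ) := by
        refine le_trans (Nat.le_ceil C) ?_
        exact_mod_cast le_max_right N (Nat.ceil C)
      -- the moved coordinate value
      set t : ℝ := if x.1 i1 = 0 then 2 * S k else 1 - 2 * S k with htdef
      have ht01 : t ∈ Icc (0:ℝ) 1 := by
        rw [htdef]; split_ifs <;> constructor <;> linarith
      set y : ↥(cube d) := ⟨updPt x.1 i1 t, by
        intro i
        rw [updPt_apply]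
        split_ifs with h
        · exact ht01
        · exact x.2 i⟩ with hydef
      have hycoord : ∀ i, i ≠ i1 → x.1 i = y.1 i := by
        intro i h
        show x.1 i = updPt x.1 i1 t i
        rw [updPt_apply, if_neg h]
      have hyi1 : y.1 i1 = t := by
        show updPt x.1 i1 t i1 = t
        rw [updPt_apply, if_pos rfl]
      have hdist : dist x y = 2 * S k := by
        rw [Subtype.dist_eq, dist_eq_single i1 hycoord, hyi1, htdef]
        rcases hbd with h | h
        · rw [if_pos h, h, abs_of_nonpos (by linarith)]; ring
        · rw [if_neg (show ¬ x.1 i1 = 0 by rw [h]; norm_num), h,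
            abs_of_nonneg (by linarith)]; ring
      have hyx : y ≠ x := by
        intro h
        have h2 : y.1 i1 = x.1 i1 := by rw [h]
        rw [hyi1, htdef] at h2
        rcases hbd with h' | h'
        · rw [if_pos h', h'] at h2; linarith
        · rw [if_neg (show ¬ x.1 i1 = 0 by rw [h']; norm_num), h'] at h2; linarith
      -- coordinate separation of images
      set c := osc E P (x.1 i0) with hcdef
      have hcy : osc E P (y.1 i0) = c := by rw [← hycoord i0 hne]
      have hFx1 : (F x).1 i1 = th E S (psi c (x.1 i1)) := Fmap_apply_i1 x.1
      have hFy1 : (F y).1 i1 = th E S (psi c t) := by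
        show Fmap i0 i1 E S P y.1 i1 = _
        rw [Fmap_apply_i1, hcy, hyi1]
      have hcsmall : |c| ≤ 1/2 := osc_small (P := P) hE hE2 _
      have hsep : delk E k ≤ |(F y).1 i1 - (F x).1 i1| := by
        rw [hFx1, hFy1]
        rcases hbd with h | h
        · rw [h, psi_zero, th_zero hE hS, htdef, if_pos h]
          have hgap := psi_gap hcsmall (show (0:ℝ) ≤ 2 * S k by linarith)
          rw [psi_zero] at hgap
          have hmem2 : psi c (2 * S k) ∈ Icc (0:ℝ) 1 :=
            psi_mem hcsmall ⟨by linarith, by linarith⟩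
          have hge := th_ge_delk hE hE2 hS k
            (show S k ≤ psi c (2 * S k) by linarith) hmem2.2
          rw [sub_zero, abs_of_nonneg (by linarith [delk_pos hE k])]
          exact hge
        · rw [h, psi_one, th_one hE hS, htdef, if_neg (by rw [h]; norm_num)]
          have hgap := psi_gap hcsmall (show 1 - 2 * S k ≤ (1:ℝ) by linarith)
          rw [psi_one] at hgap
          have hmem2 : psi c (1 - 2 * S k) ∈ Icc (0:ℝ) 1 :=
            psi_mem hcsmall ⟨by linarith, by linarith⟩
          have hle := th_le_one_sub hE hE2 hS k hmem2.1
            (show psi c (1 - 2 * S k) ≤ 1 - S k by linarith)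
          rw [abs_of_nonpos (by linarith [delk_pos hE k])]
          linarith
      have hsepd : delk E k ≤ dist (F x) (F y) := by
        rw [Subtype.dist_eq]
        refine le_trans hsep ?_
        rw [abs_sub_comm]
        exact coord_le_dist _ _ i1
      have hcs := hcS k g hg (F x) (F y) hsepd
      -- conclude
      have hdpos : 0 < dist x y := by rw [hdist]; linarith
      refine ⟨y, ?_, hyx, ?_⟩
      · rw [dist_comm, hdist]; exact hSkr
      · rw [lt_div_iff₀ hdpos]
        have hmult := hS2 k
        have hknn : (0:ℝ) ≤ (k:ℝ) := Nat.cast_nonneg k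
        nlinarith [hdist.le, hdist.ge]
    · -- interior mechanism
      push_neg at hbd
      obtain ⟨hb0, hb1⟩ := hbd
      have hwpos : 0 < wfun (x.1 i1) := by
        unfold wfun
        apply lt_min
        · exact lt_of_le_of_ne hx1mem.1 (Ne.symm hb0)
        · have := lt_of_le_of_ne hx1mem.2 hb1
          linarith
      obtain ⟨N1, hN1⟩ : ∃ N1 : ℕ, ((4:ℝ)⁻¹)^N1 < wfun (x.1 i1) :=
        exists_pow_lt_of_lt_one hwpos (by norm_num)
      obtain ⟨N2, hN2⟩ : ∃ N2 : ℕ, ((32:ℝ)⁻¹)^N2 < r :=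
        exists_pow_lt_of_lt_one hr (by norm_num)
      set n := max (max N1 N2) (Nat.ceil C) with hndef
      have hβ : ((4:ℝ)⁻¹)^(n+1) ≤ wfun (x.1 i1) := by
        refine le_trans ?_ hN1.le
        exact pow_le_pow_of_le_one (by norm_num) (by norm_num) (by omega)
      have hPr : P n < r := by
        refine lt_of_le_of_lt (hPsmall n) (lt_of_le_of_lt ?_ hN2)
        exact pow_le_pow_of_le_one (by norm_num) (by norm_num) (by omega)
      have hCn : C ≤ (n:ℝ) := by
        refine le_trans (Nat.le_ceil C) ?_
        exact_mod_cast le_max_right (max N1 N2) (Nat.ceil C)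
      set s := x.1 i0 with hsdef
      obtain ⟨z, hz01, hzs, hosc⟩ := osc_osc hE hP hPs n (x.2 i0)
      set y : ↥(cube d) := ⟨updPt x.1 i0 z, by
        intro i
        rw [updPt_apply]
        split_ifs with h
        · exact hz01
        · exact x.2 i⟩ with hydef
      have hycoord : ∀ i, i ≠ i0 → x.1 i = y.1 i := by
        intro i h
        show x.1 i = updPt x.1 i0 z i
        rw [updPt_apply, if_neg h]
      have hyi0 : y.1 i0 = z := by
        show updPt x.1 i0 z i0 = z
        rw [updPt_apply, if_pos rfl]
      have hyi1 : y.1 i1 = x.1 i1 := (hycoord i1 (Ne.symm hne)).symm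
      have hzne : z ≠ s := by
        intro h
        rw [h, sub_self, abs_zero] at hosc
        linarith [ak_pos hE n]
      have hdist : dist x y = |z - s| := by
        rw [Subtype.dist_eq, dist_eq_single i0 hycoord, hyi0, abs_sub_comm]
      have hdpos : 0 < dist x y := by
        rw [hdist]
        exact abs_pos.mpr (sub_ne_zero.mpr hzne)
      have hyx : y ≠ x := by
        intro h
        rw [h, dist_self] at hdpos
        exact lt_irrefl _ hdpos
      -- separation
      have hFx1 : (F x).1 i1 = th E S (psi (osc E P s) (x.1 i1)) := Fmap_apply_i1 x.1
      have hFy1 : (F y).1 i1 = th E S (psi (osc E P z) (x.1 i1)) := by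
        show Fmap i0 i1 E S P y.1 i1 = _
        rw [Fmap_apply_i1, hyi0, hyi1]
      have hsep : e n ≤ |(F y).1 i1 - (F x).1 i1| := by
        rw [hFx1, hFy1]
        have hgap := th_gap hE hE2 hS (psi (osc E P z) (x.1 i1)) (psi (osc E P s) (x.1 i1))
        have hpsidiff : psi (osc E P z) (x.1 i1) - psi (osc E P s) (x.1 i1)
            = (osc E P z - osc E P s) * wfun (x.1 i1) := by
          unfold psi; ring
        have habs : |psi (osc E P z) (x.1 i1) - psi (osc E P s) (x.1 i1)|
            = |osc E P z - osc E P s| * wfun (x.1 i1) := by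
          rw [hpsidiff, abs_mul, abs_of_nonneg hwpos.le]
        have hβpos : (0:ℝ) < ((4:ℝ)⁻¹)^(n+1) := by positivity
        have hlow : (ak E n / 2) * ((4:ℝ)⁻¹)^(n+1)
            ≤ |osc E P z - osc E P s| * wfun (x.1 i1) := by
          apply mul_le_mul hosc hβ hβpos.le (abs_nonneg _)
        rw [hedef]
        calc (1 - 2*E/3) * (ak E n / 2) * ((4:ℝ)⁻¹)^(n+1)
            ≤ (1 - 2*E/3) * (|osc E P z - osc E P s| * wfun (x.1 i1)) := by
              rw [mul_assoc]
              exact mul_le_mul_of_nonneg_left hlow hw0.le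
          _ = (1 - 2*E/3) * |psi (osc E P z) (x.1 i1) - psi (osc E P s) (x.1 i1)| := by
              rw [habs]
          _ ≤ |th E S (psi (osc E P z) (x.1 i1)) - th E S (psi (osc E P s) (x.1 i1))| := hgap
      have hsepd : e n ≤ dist (F x) (F y) := by
        rw [Subtype.dist_eq]
        refine le_trans hsep ?_
        rw [abs_sub_comm]
        exact coord_le_dist _ _ i1
      have hcs := hcP n g hg (F x) (F y) hsepd
      have hmult := hPcP n
      have hdP : dist x y ≤ P n := by rw [hdist]; exact hzs
      refine ⟨y, ?_, hyx, ?_⟩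
      · rw [dist_comm]; exact lt_of_le_of_lt hdP hPr
      · rw [lt_div_iff₀ hdpos]
        have hnnn : (0:ℝ) ≤ (n:ℝ) := Nat.cast_nonneg n
        nlinarith
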